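/- Let a, b ≥ 0 and x ≥ 0. Then ∑_{k=0}^∞ (a x)^k / Γ(k/2 + 1) = e^{a²x²}(1 + Erf(a x)) ≤ 2 e^{a²x²}, where Erf is the error function. In particular, ∑_{k=0}^∞ c^k/Γ(k/2+1) ≤ 2 e^{c²} for c ≥ 0. -/

import Mathlib

open MeasureTheory intervalIntegral

/-- The error function `Erf(x) = (2/√π) ∫_0^x e^{−t²} dt`. -/
noncomputable def erf (x : ℝ) : ℝ :=
  (2 / Real.sqrt Real.pi) * ∫ t in (0 : ℝ)..x, Real.exp (-t ^ 2)


noncomputable def mlOdd (x : ℝ) : ℝ := ∑' n : ℕ, x ^ (2*n+1) / Real.Gamma ((n:ℝ) + 3/2)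

lemma sqrt_pi_pos : 0 < Real.sqrt Real.pi := Real.sqrt_pos.2 Real.pi_pos

lemma one_le_sqrt_pi : 1 ≤ Real.sqrt Real.pi := by
  rw [show (1:ℝ) = Real.sqrt 1 by simp]
  exact Real.sqrt_le_sqrt (by linarith [Real.pi_gt_three])

lemma gamma_half_ge (n : ℕ) : (n.factorial : ℝ) / 2 ≤ Real.Gamma ((n:ℝ) + 3/2) := by
  induction n with
  | zero =>
      have h : Real.Gamma ((0:ℕ) + 3/2 : ℝ) = (1/2) * Real.sqrt Real.pi := by
        rw [show ((0:ℕ) + 3/2 : ℝ) = 1/2 + 1 by norm_num,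
          Real.Gamma_add_one (by norm_num), Real.Gamma_one_half_eq]
      rw [h]
      simp only [Nat.factorial_zero, Nat.cast_one]
      nlinarith [one_le_sqrt_pi]
  | succ n ih =>
      have h : Real.Gamma ((n+1:ℕ) + 3/2 : ℝ) = ((n:ℝ) + 3/2) * Real.Gamma ((n:ℝ) + 3/2) := by
        rw [show ((n+1:ℕ) + 3/2 : ℝ) = ((n:ℝ) + 3/2) + 1 by push_cast; ring,
          Real.Gamma_add_one (by positivity)]
      rw [h]
      have hpos : (0:ℝ) < Real.Gamma ((n:ℝ) + 3/2) := Real.Gamma_pos_of_pos (by positivity)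
      have : ((n:ℝ)+1) * ((n.factorial : ℝ)/2) ≤ ((n:ℝ) + 3/2) * Real.Gamma ((n:ℝ) + 3/2) := by
        apply mul_le_mul (by linarith) ih (by positivity) (by positivity)
      calc ((n+1).factorial : ℝ) / 2 = ((n:ℝ)+1) * ((n.factorial:ℝ)/2) := by
            push_cast [Nat.factorial_succ]; ring
        _ ≤ _ := this

lemma gamma_half_pos (n : ℕ) : (0:ℝ) < Real.Gamma ((n:ℝ) + 3/2) :=
  Real.Gamma_pos_of_pos (by positivity)

lemma odd_summable (x : ℝ) : Summable (fun n : ℕ => x ^ (2*n+1) / Real.Gamma ((n:ℝ) + 3/2)) := by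
  apply Summable.of_norm_bounded (g := fun n : ℕ => 2 * |x| * (x^2)^n / n.factorial)
    (((Real.summable_pow_div_factorial (x^2)).mul_left (2 * |x|)).congr (by intro n; ring))
  intro n
  have h1 : ‖x ^ (2*n+1) / Real.Gamma ((n:ℝ) + 3/2)‖
      = |x| ^ (2*n+1) / Real.Gamma ((n:ℝ) + 3/2) := by
    rw [norm_div, Real.norm_eq_abs, Real.norm_eq_abs, abs_pow,
      abs_of_pos (gamma_half_pos n)]
  rw [h1]
  have h2 : |x| ^ (2*n+1) = |x| * (x^2)^n := by
    rw [pow_succ, pow_mul, sq_abs]; ring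
  rw [h2, div_le_div_iff₀ (gamma_half_pos n) (by positivity)]
  have := gamma_half_ge n
  have hx : 0 ≤ |x| * (x^2)^n := by positivity
  nlinarith [mul_le_mul_of_nonneg_left (gamma_half_ge n) hx]

lemma dterm_eq (n : ℕ) (x : ℝ) :
    ((2*n+1 : ℕ) : ℝ) * x ^ (2*n) / Real.Gamma ((n:ℝ) + 3/2)
      = 2 * x ^ (2*n) / Real.Gamma ((n:ℝ) + 1/2) := by
  have h0 : Real.Gamma ((n:ℝ) + 3/2) = ((n:ℝ) + 1/2) * Real.Gamma ((n:ℝ) + 1/2) := by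
    rw [show ((n:ℝ) + 3/2) = ((n:ℝ) + 1/2) + 1 by ring, Real.Gamma_add_one (by positivity)]
  have hpos : (0:ℝ) < Real.Gamma ((n:ℝ) + 1/2) := Real.Gamma_pos_of_pos (by positivity)
  rw [h0]
  have hn : ((2*n+1 : ℕ) : ℝ) = 2 * ((n:ℝ) + 1/2) := by push_cast; ring
  rw [hn]
  field_simp

lemma half_summable (x : ℝ) :
    Summable (fun n : ℕ => 2 * x ^ (2*(n+1)) / Real.Gamma (((n:ℝ)+1) + 1/2)) := by
  apply Summable.congr ((odd_summable x).mul_left (2*x))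
  intro n
  have h1 : ((n:ℝ)+1) + 1/2 = (n:ℝ) + 3/2 := by ring
  rw [h1, show 2*(n+1) = (2*n+1)+1 by ring, pow_succ]
  ring

lemma D_eq (x : ℝ) :
    ∑' n : ℕ, ((2*n+1 : ℕ) : ℝ) * x ^ (2*n) / Real.Gamma ((n:ℝ) + 3/2)
      = 2 / Real.sqrt Real.pi + 2 * x * mlOdd x := by
  rw [tsum_congr (fun n => dterm_eq n x)]
  have h := tsum_eq_zero_add' (f := fun n : ℕ => 2 * x ^ (2*n) / Real.Gamma ((n:ℝ) + 1/2)) ?_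
  · rw [h]
    congr 1
    · norm_num [Real.Gamma_one_half_eq]
    · have key : ∀ n : ℕ, 2 * x ^ (2*(n+1)) / Real.Gamma (((n+1:ℕ):ℝ) + 1/2)
          = 2 * x * (x ^ (2*n+1) / Real.Gamma ((n:ℝ) + 3/2)) := by
        intro n
        have h1 : (((n+1:ℕ)):ℝ) + 1/2 = (n:ℝ) + 3/2 := by push_cast; ring
        rw [h1, show 2*(n+1) = (2*n+1)+1 by ring, pow_succ]
        ring
      calc ∑' n : ℕ, 2 * x ^ (2*(n+1)) / Real.Gamma (((n+1:ℕ):ℝ) + 1/2)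
          = ∑' n : ℕ, 2 * x * (x ^ (2*n+1) / Real.Gamma ((n:ℝ) + 3/2)) := tsum_congr key
        _ = 2 * x * mlOdd x := by rw [tsum_mul_left]; rfl
  · exact (half_summable x).congr (by intro n; push_cast; ring_nf)

lemma deriv_bound (n : ℕ) (R y : ℝ) (hyR : |y| ≤ R) :
    ‖((2*n+1 : ℕ) : ℝ) * y ^ (2*n) / Real.Gamma ((n:ℝ) + 3/2)‖
      ≤ 4 * (2*R^2)^n / n.factorial := by
  have hR0 : (0:ℝ) ≤ R := le_trans (abs_nonneg y) hyR
  have hy0 : (0:ℝ) ≤ |y| := abs_nonneg y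
  have hpow : |y| ^ (2*n) ≤ (R^2)^n := by
    rw [← pow_mul]
    exact pow_le_pow_left₀ hy0 hyR _
  have h2 : ‖((2*n+1 : ℕ) : ℝ) * y ^ (2*n) / Real.Gamma ((n:ℝ) + 3/2)‖
      = ((2*n+1 : ℕ) : ℝ) * |y| ^ (2*n) / Real.Gamma ((n:ℝ) + 3/2) := by
    rw [norm_div, norm_mul, Real.norm_eq_abs, Real.norm_eq_abs, Real.norm_eq_abs, abs_pow,
      abs_of_pos (gamma_half_pos n), abs_of_nonneg (by positivity : (0:ℝ) ≤ ((2*n+1:ℕ):ℝ))]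
  rw [h2]
  have hfac : (0:ℝ) < n.factorial := by positivity
  rw [div_le_div_iff₀ (gamma_half_pos n) hfac]
  have hg := gamma_half_ge n
  have e1 : ((2*n+1 : ℕ) : ℝ) ≤ 2 * 2^n := by
    have h2n : (n:ℝ) + 1 ≤ 2^n := by exact_mod_cast Nat.lt_two_pow_self (n := n)
    push_cast; linarith
  calc ((2*n+1:ℕ):ℝ) * |y| ^ (2*n) * n.factorial
      ≤ (2 * 2^n) * (R^2)^n * n.factorial := by
        apply mul_le_mul_of_nonneg_right _ hfac.le
        exact mul_le_mul e1 hpow (by positivity) (by positivity)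
    _ = 2 * ((2*R^2)^n * n.factorial) := by rw [mul_pow]; ring
    _ = 4 * (2*R^2)^n * ((n.factorial : ℝ)/2) := by ring
    _ ≤ 4 * (2*R^2)^n * Real.Gamma ((n:ℝ) + 3/2) :=
        mul_le_mul_of_nonneg_left hg (by positivity)

lemma mlOdd_hasDerivAt (x : ℝ) :
    HasDerivAt mlOdd (2 / Real.sqrt Real.pi + 2 * x * mlOdd x) x := by
  set R : ℝ := |x| + 1 with hR
  have hu : Summable (fun n : ℕ => 4 * (2*R^2)^n / n.factorial) :=
    ((Real.summable_pow_div_factorial (2*R^2)).mul_left 4).congr (by intro n; ring)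
  have hterm : ∀ (n : ℕ) (y : ℝ), y ∈ Metric.ball (0:ℝ) R →
      HasDerivAt (fun z => z ^ (2*n+1) / Real.Gamma ((n:ℝ) + 3/2))
        (((2*n+1 : ℕ) : ℝ) * y ^ (2*n) / Real.Gamma ((n:ℝ) + 3/2)) y := by
    intro n y _
    have := (hasDerivAt_pow (2*n+1) y).div_const (Real.Gamma ((n:ℝ) + 3/2))
    simpa using this
  have hbound : ∀ (n : ℕ) (y : ℝ), y ∈ Metric.ball (0:ℝ) R →
      ‖((2*n+1 : ℕ) : ℝ) * y ^ (2*n) / Real.Gamma ((n:ℝ) + 3/2)‖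
        ≤ 4 * (2*R^2)^n / n.factorial := by
    intro n y hy
    apply deriv_bound
    have := Metric.mem_ball.1 hy
    simp only [Real.dist_eq, sub_zero] at this
    linarith
  have hx0 : x ∈ Metric.ball (0:ℝ) R := by
    simp only [Metric.mem_ball, Real.dist_eq, sub_zero, hR]
    linarith [abs_nonneg x]
  have h := hasDerivAt_tsum_of_isPreconnected hu Metric.isOpen_ball
    (convex_ball (0:ℝ) R).isPreconnected hterm hbound hx0 (odd_summable x) hx0
  rw [D_eq x] at h
  exact h

lemma cont_gauss : Continuous (fun t : ℝ => Real.exp (-t ^ 2)) :=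
  Real.continuous_exp.comp (continuous_pow 2).neg

lemma mlOdd_zero : mlOdd 0 = 0 := by
  unfold mlOdd
  have : ∀ n : ℕ, (0:ℝ) ^ (2*n+1) / Real.Gamma ((n:ℝ) + 3/2) = 0 := by
    intro n; rw [zero_pow (by omega)]; simp
  rw [tsum_congr this, tsum_zero]

lemma F_hasDeriv (y : ℝ) :
    HasDerivAt (fun z => Real.sqrt Real.pi / 2 * (Real.exp (-z^2) * mlOdd z)
      - ∫ t in (0:ℝ)..z, Real.exp (-t^2)) 0 y := by
  have hexp : HasDerivAt (fun z : ℝ => Real.exp (-z^2)) (Real.exp (-y^2) * (-(2*y))) y := by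
    have h1 : HasDerivAt (fun z : ℝ => -z^2) (-(2*y)) y := by
      exact (by simpa using hasDerivAt_pow 2 y : HasDerivAt (fun z : ℝ => z^2) (2*y) y).neg
    exact (Real.hasDerivAt_exp _).comp y h1
  have hprod := hexp.mul (mlOdd_hasDerivAt y)
  have hscaled := hprod.const_mul (Real.sqrt Real.pi / 2)
  have hint : HasDerivAt (fun z => ∫ t in (0:ℝ)..z, Real.exp (-t^2)) (Real.exp (-y^2)) y :=
    intervalIntegral.integral_hasDerivAt_right (cont_gauss.intervalIntegrable _ _)
      (cont_gauss.stronglyMeasurable.stronglyMeasurableAtFilter) cont_gauss.continuousAt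
  have h := hscaled.sub hint
  have hsq : Real.sqrt Real.pi ≠ 0 := ne_of_gt sqrt_pi_pos
  have hval : Real.sqrt Real.pi / 2 *
        (Real.exp (-y^2) * (-(2*y)) * mlOdd y +
          Real.exp (-y^2) * (2 / Real.sqrt Real.pi + 2 * y * mlOdd y))
      - Real.exp (-y^2) = 0 := by
    field_simp
    ring
  rwa [hval] at h

lemma mlOdd_eq (x : ℝ) : mlOdd x = Real.exp (x^2) * erf x := by
  have hdiff : Differentiable ℝ (fun z => Real.sqrt Real.pi / 2 * (Real.exp (-z^2) * mlOdd z)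
      - ∫ t in (0:ℝ)..z, Real.exp (-t^2)) := fun z => (F_hasDeriv z).differentiableAt
  have hconst := is_const_of_deriv_eq_zero hdiff (fun z => (F_hasDeriv z).deriv) x 0
  simp only [mlOdd_zero, mul_zero, intervalIntegral.integral_same, sub_zero, neg_zero,
    Real.exp_zero, mul_one] at hconst
  have hsq : Real.sqrt Real.pi ≠ 0 := ne_of_gt sqrt_pi_pos
  have hexp : Real.exp (-x^2) ≠ 0 := Real.exp_ne_zero _
  unfold erf
  have hInt : (∫ t in (0:ℝ)..x, Real.exp (-t^2))
      = Real.sqrt Real.pi / 2 * (Real.exp (-x^2) * mlOdd x) := by linarith [hconst]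
  have h1 : (2 / Real.sqrt Real.pi) * (Real.sqrt Real.pi / 2 * (Real.exp (-x^2) * mlOdd x))
      = Real.exp (-x^2) * mlOdd x := by field_simp
  rw [hInt, h1, ← mul_assoc, ← Real.exp_add]
  simp

lemma erf_le_one {c : ℝ} (hc : 0 ≤ c) : erf c ≤ 1 := by
  have hint : IntegrableOn (fun t : ℝ => Real.exp (-t^2)) (Set.Ioi 0) := by
    have := (integrable_exp_neg_mul_sq (by norm_num : (0:ℝ) < 1)).integrableOn
      (s := Set.Ioi (0:ℝ))
    simpa using this
  have h1 : (∫ t in (0:ℝ)..c, Real.exp (-t^2)) ≤ ∫ t in Set.Ioi (0:ℝ), Real.exp (-t^2) := by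
    rw [intervalIntegral.integral_of_le hc]
    apply setIntegral_mono_set hint
    · filter_upwards with t using (Real.exp_pos _).le
    · exact Filter.Eventually.of_forall Set.Ioc_subset_Ioi_self
  have h2 : (∫ t in Set.Ioi (0:ℝ), Real.exp (-t^2)) = Real.sqrt Real.pi / 2 := by
    have := integral_gaussian_Ioi 1
    simpa using this
  unfold erf
  rw [div_mul_eq_mul_div, mul_comm]
  rw [div_le_one sqrt_pi_pos]
  calc (∫ t in (0:ℝ)..c, Real.exp (-t^2)) * 2 ≤ (Real.sqrt Real.pi / 2) * 2 := by
        apply mul_le_mul_of_nonneg_right (le_trans h1 (le_of_eq h2)) (by norm_num)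
    _ = Real.sqrt Real.pi := by ring

set_option maxHeartbeats 1000000 in
lemma key (c : ℝ) (hc : 0 ≤ c) :
    (∑' k : ℕ, c ^ k / Real.Gamma ((k : ℝ) / 2 + 1)
      = Real.exp (c ^ 2) * (1 + erf c)) ∧
    (∑' k : ℕ, c ^ k / Real.Gamma ((k : ℝ) / 2 + 1) ≤ 2 * Real.exp (c ^ 2)) := by
  have heven : ∀ n : ℕ, c ^ (2*n) / Real.Gamma (((2*n : ℕ) : ℝ) / 2 + 1)
      = (c^2)^n / n.factorial := by
    intro n
    have h1 : ((2*n : ℕ) : ℝ) / 2 + 1 = (n:ℝ) + 1 := by push_cast; ring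
    rw [h1, Real.Gamma_nat_eq_factorial, pow_mul]
  have hodd : ∀ n : ℕ, c ^ (2*n+1) / Real.Gamma (((2*n+1 : ℕ) : ℝ) / 2 + 1)
      = c ^ (2*n+1) / Real.Gamma ((n:ℝ) + 3/2) := by
    intro n
    have h1 : ((2*n+1 : ℕ) : ℝ) / 2 + 1 = (n:ℝ) + 3/2 := by push_cast; ring
    rw [h1]
  have he : Summable (fun n : ℕ => c ^ (2*n) / Real.Gamma (((2*n : ℕ) : ℝ) / 2 + 1)) := by
    apply Summable.congr (Real.summable_pow_div_factorial (c^2))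
    intro n; rw [heven n]
  have ho : Summable (fun n : ℕ => c ^ (2*n+1) / Real.Gamma (((2*n+1 : ℕ) : ℝ) / 2 + 1)) := by
    apply Summable.congr (odd_summable c)
    intro n; rw [hodd n]
  have hsplit := tsum_even_add_odd (f := fun k : ℕ => c ^ k / Real.Gamma ((k:ℝ)/2+1)) he ho
  have hE : ∑' n : ℕ, c ^ (2*n) / Real.Gamma (((2*n : ℕ) : ℝ) / 2 + 1) = Real.exp (c^2) := by
    rw [tsum_congr heven]
    rw [Real.exp_eq_exp_ℝ, NormedSpace.exp_eq_tsum_div]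
  have hO : ∑' n : ℕ, c ^ (2*n+1) / Real.Gamma (((2*n+1 : ℕ) : ℝ) / 2 + 1)
      = Real.exp (c^2) * erf c := by
    rw [tsum_congr hodd]
    exact mlOdd_eq c
  have hmain : ∑' k : ℕ, c ^ k / Real.Gamma ((k : ℝ) / 2 + 1)
      = Real.exp (c ^ 2) * (1 + erf c) := by
    rw [← hsplit, hE, hO]; ring
  refine ⟨hmain, ?_⟩
  rw [hmain]
  have h1 : 1 + erf c ≤ 2 := by linarith [erf_le_one hc]
  nlinarith [Real.exp_pos (c^2)]

/-- Mittag-Leffler-type summation: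
`∑_{k=0}^∞ (ax)^k/Γ(k/2+1) = e^{a²x²}(1 + Erf(ax)) ≤ 2e^{a²x²}`, and in particular
`∑_k c^k/Γ(k/2+1) ≤ 2 e^{c²}` for `c ≥ 0`. -/
theorem mittag_leffler_erf (a x : ℝ) (ha : 0 ≤ a) (hx : 0 ≤ x) :
    (∑' k : ℕ, (a * x) ^ k / Real.Gamma ((k : ℝ) / 2 + 1)
        = Real.exp (a ^ 2 * x ^ 2) * (1 + erf (a * x))) ∧
      (∑' k : ℕ, (a * x) ^ k / Real.Gamma ((k : ℝ) / 2 + 1)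
          ≤ 2 * Real.exp (a ^ 2 * x ^ 2)) ∧
      (∀ c : ℝ, 0 ≤ c →
        ∑' k : ℕ, c ^ k / Real.Gamma ((k : ℝ) / 2 + 1) ≤ 2 * Real.exp (c ^ 2)) := by
  have h := key (a * x) (mul_nonneg ha hx)
  have hsq : (a * x) ^ 2 = a ^ 2 * x ^ 2 := by ring
  rw [hsq] at h
  exact ⟨h.1, h.2, fun c hc => (key c hc).2⟩
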